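/- arXiv:2208.05238 — 6 statements merged into one kernel-verified Lean document; each statement's English description precedes it below -/
import Mathlib

section
/- Let V, W be finite-dimensional real inner product spaces, P : V → V a linear projection, curl : V → W linear, ω ∈ ℝ, α ≠ 0, and J ∈ V. Suppose u ∈ V satisfies −ω²⟨Pv, Pu⟩ + ⟨curl(Pv), curl(Pu)⟩ + α⟨(I−P)v, (I−P)u⟩ = ⟨Pv, J⟩ for all v ∈ V. Then u = Pu ∈ range P, and u satisfies the conforming problem −ω²⟨vᶜ, u⟩ + ⟨curl vᶜ, curl u⟩ = ⟨vᶜ, J⟩ for all vᶜ ∈ range P. -/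
open scoped RealInnerProductSpace

/-- Proposition 3.2: the stabilized broken-FEEC time-harmonic
Maxwell solution is conforming and solves the conforming problem. -/
theorem stmt4
    {V W : Type*}
    [NormedAddCommGroup V] [InnerProductSpace ℝ V] [FiniteDimensional ℝ V]
    [NormedAddCommGroup W] [InnerProductSpace ℝ W] [FiniteDimensional ℝ W]
    (P : V →ₗ[ℝ] V) (hP : P ∘ₗ P = P)
    (curl : V →ₗ[ℝ] W)
    (ω α : ℝ) (hα : α ≠ 0)
    (J u : V)
    (hvar : ∀ v : V,
      -ω ^ 2 * ⟪P v, P u⟫ + ⟪curl (P v), curl (P u)⟫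
        + α * ⟪v - P v, u - P u⟫ = ⟪P v, J⟫) :
    P u = u ∧
    ∀ vc ∈ LinearMap.range P,
      -ω ^ 2 * ⟪vc, u⟫ + ⟪curl vc, curl u⟫ = ⟪vc, J⟫ := by
  have hPP : ∀ x, P (P x) = P x := fun x => LinearMap.congr_fun hP x
  have key : P u = u := by
    have h := hvar (u - P u)
    have hPv : P (u - P u) = 0 := by simp [map_sub, hPP]
    rw [hPv] at h
    simp only [map_zero, inner_zero_left, mul_zero, neg_zero, zero_add] at h
    have h0 : ⟪u - P u, u - P u⟫ = 0 := by
      rcases mul_eq_zero.mp h with h' | h'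
      · exact absurd h' hα
      · simpa using h'
    have := sub_eq_zero.mp (inner_self_eq_zero.mp h0)
    exact this.symm
  refine ⟨key, ?_⟩
  rintro vc ⟨w, rfl⟩
  have h := hvar w
  rw [key] at h
  simpa [hPP, key] using h
end

section
/- Let V, W be finite-dimensional real inner product spaces, P : V → V a linear projection, curl : V → W linear. Suppose (λ, u) with λ ≠ 0 and u ≠ 0 satisfies the generalized eigenproblem ⟨curl(Pv), curl(Pu)⟩ = λ(⟨Pv, Pu⟩ + ⟨(I−P)v, (I−P)u⟩) for all v ∈ V. Then u ∈ range P and ⟨curl v, curl u⟩ = λ⟨v, u⟩ for all v ∈ range P. Conversely, any u ∈ range P satisfying the latter also satisfies the former for all v ∈ V. -/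
open scoped RealInnerProductSpace

/-- Proposition 3.3: for `λ ≠ 0` and `u ≠ 0`, the CONGA
generalized curl-curl eigenproblem is equivalent to the conforming
eigenproblem on `range P`. -/
theorem stmt5
    {V W : Type*}
    [NormedAddCommGroup V] [InnerProductSpace ℝ V] [FiniteDimensional ℝ V]
    [NormedAddCommGroup W] [InnerProductSpace ℝ W] [FiniteDimensional ℝ W]
    (P : V →ₗ[ℝ] V) (hP : P ∘ₗ P = P)
    (curl : V →ₗ[ℝ] W)
    (lam : ℝ) (hlam : lam ≠ 0)
    (u : V) (hu : u ≠ 0) :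
    (∀ v : V,
        ⟪curl (P v), curl (P u)⟫
          = lam * (⟪P v, P u⟫ + ⟪v - P v, u - P u⟫)) ↔
    (u ∈ LinearMap.range P ∧
      ∀ v ∈ LinearMap.range P, ⟪curl v, curl u⟫ = lam * ⟪v, u⟫) := by
  have hidem : ∀ x : V, P (P x) = P x := by
    intro x
    simpa using LinearMap.congr_fun hP x
  constructor
  · intro h
    have hPu : P u = u := by
      have h0 : P (u - P u) = 0 := by
        simp [map_sub, hidem u]
      have h1 := h (u - P u)
      rw [h0] at h1
      simp only [map_zero, inner_zero_left, sub_zero] at h1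
      have h2 : ⟪u - P u, u - P u⟫ = (0:ℝ) := by
        rcases mul_eq_zero.mp h1.symm with h | h
        · exact absurd h hlam
        · simpa using h
      have h3 : u - P u = 0 := inner_self_eq_zero.mp h2
      exact (sub_eq_zero.mp h3).symm
    refine ⟨⟨u, hPu⟩, ?_⟩
    rintro v ⟨w, rfl⟩
    have h1 := h (P w)
    rw [hidem w, hPu] at h1
    simpa using h1
  · rintro ⟨⟨w, hw⟩, h⟩
    have hPu : P u = u := by rw [← hw, hidem]
    intro v
    have h1 := h (P v) ⟨v, rfl⟩
    rw [hPu, h1]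
    simp
end

section
/- Let V, W be finite-dimensional real inner product spaces, P : V → V a linear projection, d : V → W linear, and set d_h := d ∘ P. Let d̃_h := d_h* : W → V be the Hilbert-space adjoint (so ⟨d̃_h w, v⟩ = ⟨w, d(Pv)⟩). Then for any α > 0, the kernel of the stabilized operator L := d̃_h ∘ d_h + α (I−P)* (I−P) equals { v ∈ range P : d v = 0 }, i.e. it coincides with the kernel of the conforming operator restricted to the conforming subspace. -/
open scoped RealInnerProductSpace

/-- for `α > 0` the kernel of the stabilized discrete
Hodge-Laplace operator `L = d_h* d_h + α (I−P)*(I−P)` (with `d_h = d ∘ P`)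
equals the conforming kernel `{v ∈ range P : d v = 0}`. -/
theorem stmt7
    {V W : Type*}
    [NormedAddCommGroup V] [InnerProductSpace ℝ V] [FiniteDimensional ℝ V]
    [NormedAddCommGroup W] [InnerProductSpace ℝ W] [FiniteDimensional ℝ W]
    (P : V →ₗ[ℝ] V) (hP : P ∘ₗ P = P)
    (d : V →ₗ[ℝ] W)
    (α : ℝ) (hα : 0 < α) :
    LinearMap.ker
        (LinearMap.adjoint (d ∘ₗ P) ∘ₗ (d ∘ₗ P)
          + α • (LinearMap.adjoint (LinearMap.id - P) ∘ₗ (LinearMap.id - P)))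
      = LinearMap.range P ⊓ LinearMap.ker d := by
  set L : V →ₗ[ℝ] V := LinearMap.adjoint (d ∘ₗ P) ∘ₗ (d ∘ₗ P)
      + α • (LinearMap.adjoint (LinearMap.id - P) ∘ₗ (LinearMap.id - P)) with hL
  set Q : V →ₗ[ℝ] V := LinearMap.id - P with hQ
  ext v
  simp only [LinearMap.mem_ker, Submodule.mem_inf, LinearMap.mem_range]
  constructor
  · intro h
    have h0 : ⟪L v, v⟫ = 0 := by rw [h, inner_zero_left]
    have h1 : ⟪(d ∘ₗ P) v, (d ∘ₗ P) v⟫ + α * ⟪Q v, Q v⟫ = 0 := by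
      simpa [hL, LinearMap.add_apply, LinearMap.smul_apply, LinearMap.comp_apply,
        inner_add_left, real_inner_smul_left, LinearMap.adjoint_inner_left] using h0
    have hn1 : (0:ℝ) ≤ ⟪(d ∘ₗ P) v, (d ∘ₗ P) v⟫ := real_inner_self_nonneg
    have hn2 : (0:ℝ) ≤ α * ⟪Q v, Q v⟫ :=
      mul_nonneg hα.le real_inner_self_nonneg
    have e1 : ⟪(d ∘ₗ P) v, (d ∘ₗ P) v⟫ = 0 := by linarith
    have e2 : α * ⟪Q v, Q v⟫ = 0 := by linarith
    have hdP : (d ∘ₗ P) v = 0 := by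
      have := inner_self_eq_zero (𝕜 := ℝ).mp e1
      exact this
    have hIP : Q v = 0 := by
      have : ⟪Q v, Q v⟫ = 0 := by
        rcases mul_eq_zero.mp e2 with h' | h'
        · exact absurd h' (ne_of_gt hα)
        · exact h'
      exact inner_self_eq_zero (𝕜 := ℝ).mp this
    have hPv : P v = v := by
      have := sub_eq_zero.mp (by simpa [hQ, LinearMap.sub_apply] using hIP)
      exact this.symm
    refine ⟨⟨v, hPv⟩, ?_⟩
    have := hdP
    simp only [LinearMap.comp_apply, hPv] at this
    exact this
  · rintro ⟨⟨u, hu⟩, hdv⟩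
    have hPv : P v = v := by
      rw [← hu]
      have := congrArg (fun f => f u) hP
      simpa using this
    have hQv : Q v = 0 := by simp [hQ, LinearMap.sub_apply, hPv]
    simp [hL, LinearMap.add_apply, LinearMap.smul_apply, LinearMap.comp_apply, hPv, hdv, hQv]
end

section
/- Let E⁰ ∈ V and B^{1/2} ∈ W be elements of finite-dimensional real inner product spaces, C : V → W linear with adjoint C* : W → V, and Δt > 0. Define the leap-frog iteration Eⁿ⁺¹ = Eⁿ + Δt · C* Bⁿ⁺¹ᐟ², Bⁿ⁺³ᐟ² = Bⁿ⁺¹ᐟ² − Δt · C Eⁿ⁺¹. Then the discrete pseudo-energy H*ₙ := ½(‖Eⁿ‖² + ‖Bⁿ⁺¹ᐟ²‖²) + (Δt/2)⟨C Eⁿ, Bⁿ⁺¹ᐟ²⟩ is constant in n: H*ₙ₊₁ = H*ₙ for all n ≥ 0. -/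
open scoped RealInnerProductSpace

/-- pseudo-energy conservation, Section 3.6: the sourceless
leap-frog iteration `Eⁿ⁺¹ = Eⁿ + Δt C* Bⁿ⁺¹ᐟ²`, `Bⁿ⁺³ᐟ² = Bⁿ⁺¹ᐟ² − Δt C Eⁿ⁺¹`
conserves the discrete pseudo-energy
`H*ₙ = ½(‖Eⁿ‖² + ‖Bⁿ⁺¹ᐟ²‖²) + (Δt/2)⟨C Eⁿ, Bⁿ⁺¹ᐟ²⟩`. -/
theorem stmt13
    {V W : Type*}
    [NormedAddCommGroup V] [InnerProductSpace ℝ V] [FiniteDimensional ℝ V]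
    [NormedAddCommGroup W] [InnerProductSpace ℝ W] [FiniteDimensional ℝ W]
    (C : V →ₗ[ℝ] W)
    (Δt : ℝ) (hΔt : 0 < Δt)
    (E : ℕ → V) (B : ℕ → W)
    (hE : ∀ n, E (n + 1) = E n + Δt • LinearMap.adjoint C (B n))
    (hB : ∀ n, B (n + 1) = B n - Δt • C (E (n + 1))) :
    ∀ n : ℕ,
      (‖E (n + 1)‖ ^ 2 + ‖B (n + 1)‖ ^ 2) / 2
          + Δt / 2 * ⟪C (E (n + 1)), B (n + 1)⟫
        = (‖E n‖ ^ 2 + ‖B n‖ ^ 2) / 2 + Δt / 2 * ⟪C (E n), B n⟫ := by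
  intro n
  rw [hB n, hE n]
  simp only [norm_add_sq_real, norm_sub_sq_real, map_add, map_smul, norm_smul,
    inner_add_left, inner_add_right, inner_sub_right, inner_smul_left, inner_smul_right,
    real_inner_smul_left, real_inner_smul_right, LinearMap.adjoint_inner_left,
    real_inner_self_eq_norm_sq, Real.norm_eq_abs, mul_pow, sq_abs,
    LinearMap.adjoint_inner_right, starRingEnd_apply, star_trivial,
    real_inner_comm (B n)]
  have h1 : ⟪B n, C (LinearMap.adjoint C (B n))⟫
      = ‖LinearMap.adjoint C (B n)‖ ^ 2 := by
    rw [real_inner_comm, ← LinearMap.adjoint_inner_right, real_inner_self_eq_norm_sq]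
  have h2 : ⟪C (E n), C (LinearMap.adjoint C (B n))⟫
      = ⟪C (LinearMap.adjoint C (B n)), C (E n)⟫ := real_inner_comm _ _
  rw [h1, h2]
  ring
end

section
/- Let V, W be finite-dimensional real inner product spaces, C : V → W linear with operator norm ‖C‖, and Δt > 0 with Δt·‖C‖ < 2. Then for any E ∈ V and B ∈ W, the pseudo-energy H* := ½(‖E‖² + ‖B‖²) + (Δt/2)⟨CE, B⟩ satisfies the two-sided bound (1 + Δt‖C‖/2)⁻¹ H* ≤ ½(‖E‖² + ‖B‖²) ≤ (1 − Δt‖C‖/2)⁻¹ H*. -/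
open scoped RealInnerProductSpace

/-- CFL stability bound, Section 3.6: if `Δt ‖C‖ < 2` then the
pseudo-energy `H* = ½(‖E‖² + ‖B‖²) + (Δt/2)⟨CE, B⟩` controls the energy
from both sides. -/
theorem stmt14
    {V W : Type*}
    [NormedAddCommGroup V] [InnerProductSpace ℝ V] [FiniteDimensional ℝ V]
    [NormedAddCommGroup W] [InnerProductSpace ℝ W] [FiniteDimensional ℝ W]
    (C : V →L[ℝ] W)
    (Δt : ℝ) (hΔt : 0 < Δt) (hCFL : Δt * ‖C‖ < 2)
    (E : V) (B : W) :
    (1 + Δt * ‖C‖ / 2)⁻¹ * ((‖E‖ ^ 2 + ‖B‖ ^ 2) / 2 + Δt / 2 * ⟪C E, B⟫)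
        ≤ (‖E‖ ^ 2 + ‖B‖ ^ 2) / 2 ∧
    (‖E‖ ^ 2 + ‖B‖ ^ 2) / 2
        ≤ (1 - Δt * ‖C‖ / 2)⁻¹ * ((‖E‖ ^ 2 + ‖B‖ ^ 2) / 2 + Δt / 2 * ⟪C E, B⟫) := by
  set a := Δt * ‖C‖ / 2 with ha
  have hC : 0 ≤ ‖C‖ := norm_nonneg _
  have ha0 : 0 ≤ a := by positivity
  have ha1 : a < 1 := by simp only [ha]; linarith
  have hE2 : (0:ℝ) ≤ ‖E‖ ^ 2 := sq_nonneg _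
  have hB2 : (0:ℝ) ≤ ‖B‖ ^ 2 := sq_nonneg _
  have habs : |⟪C E, B⟫| ≤ ‖C‖ * (‖E‖ ^ 2 + ‖B‖ ^ 2) / 2 := by
    have h1 : |⟪C E, B⟫| ≤ ‖C E‖ * ‖B‖ := abs_real_inner_le_norm _ _
    have h2 : ‖C E‖ ≤ ‖C‖ * ‖E‖ := C.le_opNorm E
    have h3 : ‖C E‖ * ‖B‖ ≤ (‖C‖ * ‖E‖) * ‖B‖ :=
      mul_le_mul_of_nonneg_right h2 (norm_nonneg _)
    have h4 : ‖E‖ * ‖B‖ ≤ (‖E‖ ^ 2 + ‖B‖ ^ 2) / 2 := by nlinarith [sq_nonneg (‖E‖ - ‖B‖)]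
    calc |⟪C E, B⟫| ≤ (‖C‖ * ‖E‖) * ‖B‖ := h1.trans h3
      _ = ‖C‖ * (‖E‖ * ‖B‖) := by ring
      _ ≤ ‖C‖ * ((‖E‖ ^ 2 + ‖B‖ ^ 2) / 2) := mul_le_mul_of_nonneg_left h4 hC
      _ = ‖C‖ * (‖E‖ ^ 2 + ‖B‖ ^ 2) / 2 := by ring
  have hcross : |Δt / 2 * ⟪C E, B⟫| ≤ a * ((‖E‖ ^ 2 + ‖B‖ ^ 2) / 2) := by
    rw [abs_mul, abs_of_pos (by linarith : (0:ℝ) < Δt / 2)]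
    calc Δt / 2 * |⟪C E, B⟫| ≤ Δt / 2 * (‖C‖ * (‖E‖ ^ 2 + ‖B‖ ^ 2) / 2) :=
          mul_le_mul_of_nonneg_left habs (by linarith)
      _ = a * ((‖E‖ ^ 2 + ‖B‖ ^ 2) / 2) := by rw [ha]; ring
  rw [abs_le] at hcross
  constructor
  · rw [inv_mul_le_iff₀ (by linarith : (0:ℝ) < 1 + a)]
    nlinarith [hcross.2]
  · rw [le_inv_mul_iff₀ (by linarith : (0:ℝ) < 1 - a)]
    nlinarith [hcross.1]
end

section
/- Let V⁰, V¹ be finite-dimensional real inner product spaces, grad : V⁰ → V¹ linear, P⁰ : V⁰ → V⁰ and P¹ : V¹ → V¹ linear projections with P¹ ∘ grad ∘ P⁰ = grad ∘ P⁰. Define grad_h := grad ∘ P⁰ and diṽ_h := −(grad_h)* : V¹ → V⁰, and the dual projections T⁰ := (P⁰)* Q⁰, T¹ := (P¹)* Q¹, where Q⁰, Q¹ are orthogonal projections from ambient Hilbert spaces H⁰ ⊇ V⁰, H¹ ⊇ V¹. Suppose Div : D ⊆ H¹ → H⁰ is a linear map satisfying ⟨Div u, P⁰ q⟩ = −⟨u,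 grad(P⁰ q)⟩ for all u ∈ D and q ∈ V⁰ (integration by parts against conforming test functions). Then T⁰(Div u) = diṽ_h(T¹ u) for all u ∈ D, i.e. the dual projections commute with the dual differential. -/
open scoped RealInnerProductSpace

/-- commutation (2.17) of the dual commuting projections:
if `Div` satisfies the integration-by-parts relation against conforming test
functions, then the dual projections `T⁰ = (P⁰)* Q⁰`, `T¹ = (P¹)* Q¹` commute
with the dual differential: `T⁰(Div u) = diṽ_h(T¹ u)`. -/
theorem stmt17
    {H0 H1 : Type*}
    [NormedAddCommGroup H0] [InnerProductSpace ℝ H0] [FiniteDimensional ℝ H0]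
    [NormedAddCommGroup H1] [InnerProductSpace ℝ H1] [FiniteDimensional ℝ H1]
    (V0 : Submodule ℝ H0) (V1 : Submodule ℝ H1)
    (grad : V0 →ₗ[ℝ] V1)
    (P0 : V0 →ₗ[ℝ] V0) (P1 : V1 →ₗ[ℝ] V1)
    (hP0 : P0 ∘ₗ P0 = P0) (hP1 : P1 ∘ₗ P1 = P1)
    (hconf : P1 ∘ₗ (grad ∘ₗ P0) = grad ∘ₗ P0)
    (D : Submodule ℝ H1) (Div : D →ₗ[ℝ] H0)
    (hDiv : ∀ (u : D) (q : V0),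
      ⟪Div u, ((P0 q : V0) : H0)⟫ = -⟪(u : H1), ((grad (P0 q) : V1) : H1)⟫) :
    ∀ u : D,
      LinearMap.adjoint P0 (Submodule.orthogonalProjectionOnto V0 (Div u))
        = -(LinearMap.adjoint (grad ∘ₗ P0))
            (LinearMap.adjoint P1 (Submodule.orthogonalProjectionOnto V1 (u : H1))) := by
  intro u
  apply ext_inner_right ℝ
  intro q
  rw [LinearMap.adjoint_inner_left, inner_neg_left,
    LinearMap.adjoint_inner_left, LinearMap.adjoint_inner_left,
    Submodule.inner_orthogonalProjectionOnto_eq_of_mem_right, Submodule.inner_orthogonalProjectionOnto_eq_of_mem_right]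
  have hc : P1 (grad (P0 q)) = grad (P0 q) := congrFun (congrArg DFunLike.coe hconf) q
  rw [LinearMap.comp_apply, hc]
  simpa [Submodule.coe_inner] using hDiv u q
end
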